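/- Assume W : ℝ^d → ℝ ∪ {+∞} satisfies Hypotheses (H1), (H2) and (H3a)-or-(H3b). Let ρ be a Borel probability measure on ℝ^d and let (X_N)_{N≥2} be any sequence with X_N ∈ (ℝ^d)^N whose empirical measures μ_{X_N} converge narrowly to ρ as N → ∞. Then E(ρ) ≤ liminf_{N→∞} E_N(X_N). -/

import Mathlib

open MeasureTheory Filter Topology
open scoped ENNReal NNReal

/-- The nonnegative part of an extended real, as a value in `ℝ≥0∞`. -/
noncomputable def erealToENNReal (a : EReal) : ℝ≥0∞ :=
  if a = ⊤ then ⊤ else ENNReal.ofReal a.toReal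

noncomputable section

/-- Euclidean space ℝ^d. -/
abbrev Euc (d : ℕ) : Type := EuclideanSpace ℝ (Fin d)

/-- Signed integral of an `EReal`-valued function (positive part minus negative part). -/
noncomputable def eintegral {α : Type*} [MeasurableSpace α] (μ : Measure α) (f : α → EReal) :
    EReal :=
  ((∫⁻ x, erealToENNReal (f x) ∂μ : ℝ≥0∞) : EReal) -
    ((∫⁻ x, erealToENNReal (-f x) ∂μ : ℝ≥0∞) : EReal)

/-- Continuum interaction energy `E(ρ) = (1/2) ∬ W(x−y) dρ(x) dρ(y)`. -/
noncomputable def contEnergy {d : ℕ} (W : Euc d → EReal) (ρ : Measure (Euc d)) : EReal :=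
  (((1 : ℝ) / 2 : ℝ) : EReal) * eintegral (ρ.prod ρ) fun p => W (p.1 - p.2)

/-- Discrete interaction energy `E_N(X) = (1/(2N²)) Σ_{i≠j} W(x_i − x_j)`. -/
noncomputable def discEnergy {d : ℕ} (W : Euc d → EReal) (N : ℕ) (X : Fin N → Euc d) : EReal :=
  (((1 : ℝ) / (2 * (N : ℝ) ^ 2) : ℝ) : EReal) *
    ∑ i : Fin N, ∑ j ∈ Finset.univ.erase i, W (X i - X j)

/-- `P_i(X) = (1/N) Σ_{j≠i} W(x_i − x_j)`, the potential felt by particle `i`. -/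
noncomputable def particlePotential {d : ℕ} (W : Euc d → EReal) (N : ℕ) (X : Fin N → Euc d)
    (i : Fin N) : EReal :=
  (((N : ℝ)⁻¹ : ℝ) : EReal) * ∑ j ∈ Finset.univ.erase i, W (X i - X j)

/-- Empirical measure `μ_X = (1/N) Σ δ_{x_i}`. -/
noncomputable def empMeasure {d N : ℕ} (X : Fin N → Euc d) : Measure (Euc d) :=
  (N : ℝ≥0∞)⁻¹ • ∑ i : Fin N, Measure.dirac (X i)

/-- `X` is a global minimiser of the discrete energy `E_N`. -/
def IsDiscMinimiser {d : ℕ} (W : Euc d → EReal) (N : ℕ) (X : Fin N → Euc d) : Prop :=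
  ∀ Y : Fin N → Euc d, discEnergy W N X ≤ discEnergy W N Y

/-- `ρ` is a Borel probability measure minimising the continuum energy over all
Borel probability measures. -/
def IsContMinimiser {d : ℕ} (W : Euc d → EReal) (ρ : Measure (Euc d)) : Prop :=
  IsProbabilityMeasure ρ ∧
    ∀ ν : Measure (Euc d), IsProbabilityMeasure ν → contEnergy W ρ ≤ contEnergy W ν

/-- Narrow convergence of a sequence of measures, in duality with bounded continuous
functions. -/
def NarrowTendsto {d : ℕ} (μ : ℕ → Measure (Euc d)) (ρ : Measure (Euc d)) : Prop :=
  ∀ f : BoundedContinuousFunction (Euc d) ℝ,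
    Tendsto (fun N => ∫ x, f x ∂μ N) atTop (nhds (∫ x, f x ∂ρ))

/-- Support of a measure. -/
def measSupport {d : ℕ} (ρ : Measure (Euc d)) : Set (Euc d) :=
  {x | ∀ r : ℝ, 0 < r → 0 < ρ (Metric.ball x r)}

/-- Average of `W` over the ball of radius `ε` centred at `x`. -/
noncomputable def ballAvg {d : ℕ} (W : Euc d → EReal) (x : Euc d) (ε : ℝ) : EReal :=
  (((volume (Metric.ball x ε)).toReal⁻¹ : ℝ) : EReal) *
    eintegral (volume.restrict (Metric.ball x ε)) W

/-- Generalised Laplacian `Δ⁰W(x) = liminf_{ε→0⁺} (2(d+2)/ε²)(⨍_{B_ε(x)} W − W(x))`. -/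
noncomputable def genLap {d : ℕ} (W : Euc d → EReal) (x : Euc d) : EReal :=
  Filter.liminf
    (fun ε : ℝ => (((2 * ((d : ℝ) + 2) / ε ^ 2) : ℝ) : EReal) * (ballAvg W x ε - W x))
    (nhdsWithin (0 : ℝ) (Set.Ioi 0))

/-- Local integrability of an `EReal`-valued function. -/
def ERealLocInt {d : ℕ} (W : Euc d → EReal) : Prop :=
  ∀ K : Set (Euc d), IsCompact K →
    (∫⁻ x in K, erealToENNReal (W x)) < ⊤ ∧ (∫⁻ x in K, erealToENNReal (-W x)) < ⊤

/-- `W` is β-repulsive at the origin. -/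
def BetaRepulsive {d : ℕ} (W : Euc d → EReal) (β : ℝ) : Prop :=
  ERealLocInt W ∧
    ∃ δ : ℝ, 0 < δ ∧ ∃ C : ℝ, 0 < C ∧
      (∀ x : Euc d, 0 < ‖x‖ → ‖x‖ < δ → ((C * ‖x‖ ^ (-β) : ℝ) : EReal) ≤ -genLap W x) ∧
      genLap W (0 : Euc d) = ⊥

/-- Hypothesis (H1): `W` is lower semicontinuous, bounded below by `Wmin` and locally
integrable. -/
def Hyp1 {d : ℕ} (W : Euc d → EReal) (Wmin : ℝ) : Prop :=
  LowerSemicontinuous W ∧ (∀ x, (Wmin : EReal) ≤ W x) ∧ ERealLocInt W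

/-- Hypothesis (H2): `W(x) → Winf` as `|x| → ∞`, `W` is symmetric, and `W` is radially
strictly increasing outside the ball of radius `RW > 0`. -/
def Hyp2 {d : ℕ} (W : Euc d → EReal) (Winf : EReal) (RW : ℝ) : Prop :=
  Tendsto W (cocompact (Euc d)) (nhds Winf) ∧ (∀ x, W (-x) = W x) ∧ 0 < RW ∧
    ∀ e : Euc d, ‖e‖ = 1 → ∀ r s : ℝ, RW ≤ r → r < s → W (r • e) < W (s • e)

/-- Hypothesis (H3a): `W` is bounded from above and upper semicontinuous. -/
def Hyp3a {d : ℕ} (W : Euc d → EReal) : Prop :=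
  (∃ C : ℝ, ∀ x, W x ≤ (C : EReal)) ∧ UpperSemicontinuous W

/-- Hypothesis (H3b): `W` is β-repulsive with `2 < β < d`, is `C¹` away from the origin,
and satisfies `Δ⁰W ≤ C_W`, `W(x) ≤ C_W|x|^{2−β}` and `|∇W(x)| ≤ C_W|x|^{1−β}` for `|x| ≤ 1`. -/
def Hyp3b {d : ℕ} (W : Euc d → EReal) (β C_W : ℝ) : Prop :=
  2 < β ∧ β < d ∧ 0 < C_W ∧ BetaRepulsive W β ∧
    (∃ g : Euc d → ℝ, (∀ x : Euc d, x ≠ 0 → W x = (g x : EReal)) ∧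
      ContDiffOn ℝ 1 g {(0 : Euc d)}ᶜ ∧
      ∀ x : Euc d, x ≠ 0 → ‖x‖ ≤ 1 → ‖fderiv ℝ g x‖ ≤ C_W * ‖x‖ ^ ((1 : ℝ) - β)) ∧
    (∀ x, genLap W x ≤ (C_W : EReal)) ∧
    ∀ x : Euc d, x ≠ 0 → ‖x‖ ≤ 1 → W x ≤ ((C_W * ‖x‖ ^ ((2 : ℝ) - β) : ℝ) : EReal)

/-- `W` is unstable: some probability measure has energy `< Winf/2`. -/
def Unstable {d : ℕ} (W : Euc d → EReal) (Winf : EReal) : Prop :=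
  ∃ ρ : Measure (Euc d), IsProbabilityMeasure ρ ∧
    contEnergy W ρ < (((1 : ℝ) / 2 : ℝ) : EReal) * Winf

/-- `W` is strictly stable: every probability measure has energy `> Winf/2`. -/
def StrictlyStable {d : ℕ} (W : Euc d → EReal) (Winf : EReal) : Prop :=
  ∀ ρ : Measure (Euc d), IsProbabilityMeasure ρ →
    (((1 : ℝ) / 2 : ℝ) : EReal) * Winf < contEnergy W ρ

/-- `W` is discretely unstable. -/
def DiscUnstable {d : ℕ} (W : Euc d → EReal) (Winf : EReal) : Prop :=
  ∃ s : ℝ, 0 < s ∧ ∃ Nbar : ℕ, 2 ≤ Nbar ∧ ∀ N : ℕ, Nbar < N →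
    ∃ X : Fin N → Euc d,
      discEnergy W N X < (((1 : ℝ) / 2 : ℝ) : EReal) * Winf - (s : EReal)

/-- `W` is H-unstable. -/
def HUnstable {d : ℕ} (W : Euc d → EReal) (Winf : EReal) : Prop :=
  ∀ B : ℝ, ∃ N : ℕ, 2 ≤ N ∧ ∃ X : Fin N → Euc d,
    discEnergy W N X < (((1 : ℝ) / 2 : ℝ) : EReal) * Winf - ((B / (2 * (N : ℝ)) : ℝ) : EReal)

/-- The Morrey exponent `d/q`, where `q` is the Hölder dual of `p`. -/
def morreyExp (d : ℕ) (p : ℝ≥0∞) : ℝ := (d : ℝ) * (1 - (p⁻¹).toReal)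

end
section EnergyAux

open MeasureTheory Filter Topology BoundedContinuousFunction

namespace EnergyAux

variable {d : ℕ}

/-! ### `erealToENNReal` basics -/

lemma erealToENNReal_coe (r : ℝ) : erealToENNReal ((r : ℝ) : EReal) = ENNReal.ofReal r := by
  simp [erealToENNReal]

lemma erealToENNReal_top : erealToENNReal ⊤ = ⊤ := by simp [erealToENNReal]

lemma erealToENNReal_bot : erealToENNReal ⊥ = 0 := by simp [erealToENNReal]

lemma erealToENNReal_mono {a b : EReal} (h : a ≤ b) :
    erealToENNReal a ≤ erealToENNReal b := by
  rcases eq_or_ne b ⊤ with hb | hb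
  · simp [hb, erealToENNReal]
  rcases eq_or_ne a ⊥ with ha | ha
  · simp [ha, erealToENNReal]
  · have ha' : a ≠ ⊤ := fun h' => hb (top_le_iff.1 (h' ▸ h))
    simp only [erealToENNReal, if_neg ha', if_neg hb]
    exact ENNReal.ofReal_le_ofReal (EReal.toReal_le_toReal h ha hb)

lemma tendsto_ofReal_of_tendsto {a : ℕ → ℝ} {c : EReal}
    (h : Tendsto (fun k => ((a k : ℝ) : EReal)) atTop (𝓝 c)) :
    Tendsto (fun k => ENNReal.ofReal (a k)) atTop (𝓝 (erealToENNReal c)) := by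
  induction c using EReal.rec with
  | bot =>
      rw [erealToENNReal_bot]
      have h0 : ∀ᶠ k in atTop, ((a k : ℝ) : EReal) < ((0 : ℝ) : EReal) :=
        h.eventually_lt_const (EReal.bot_lt_coe 0)
      refine Tendsto.congr' ?_ (tendsto_const_nhds (x := (0 : ℝ≥0∞)))
      filter_upwards [h0] with k hk
      rw [EReal.coe_lt_coe_iff] at hk
      simp [ENNReal.ofReal_eq_zero, hk.le]
  | coe r =>
      rw [erealToENNReal_coe]
      exact (ENNReal.continuous_ofReal.tendsto r).comp (EReal.tendsto_coe.1 h)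
  | top =>
      rw [erealToENNReal_top]
      apply ENNReal.tendsto_nhds_top
      intro n
      have h0 : ∀ᶠ k in atTop, (((n : ℝ) + 1 : ℝ) : EReal) < ((a k : ℝ) : EReal) :=
        h.eventually_const_lt (EReal.coe_lt_top _)
      filter_upwards [h0] with k hk
      rw [EReal.coe_lt_coe_iff] at hk
      calc (n : ℝ≥0∞) = ENNReal.ofReal (n : ℝ) := by simp
        _ < ENNReal.ofReal ((n : ℝ) + 1) := by
            rw [ENNReal.ofReal_lt_ofReal_iff (by positivity)]; linarith
        _ ≤ ENNReal.ofReal (a k) := ENNReal.ofReal_le_ofReal hk.le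

lemma iSup_ofReal_eq {a : ℕ → ℝ} {c : EReal} (hmono : Monotone a)
    (hsup : (⨆ k, ((a k : ℝ) : EReal)) = c) :
    (⨆ k, ENNReal.ofReal (a k)) = erealToENNReal c := by
  have h1 : Tendsto (fun k => ((a k : ℝ) : EReal)) atTop (𝓝 c) := by
    rw [← hsup]
    exact tendsto_atTop_iSup (fun i j hij => EReal.coe_le_coe_iff.2 (hmono hij))
  exact tendsto_nhds_unique
    (tendsto_atTop_iSup (fun i j hij => ENNReal.ofReal_le_ofReal (hmono hij)))
    (tendsto_ofReal_of_tendsto h1)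

lemma tendsto_ofReal_neg {a : ℕ → ℝ} {c : EReal} (hmono : Monotone a)
    (hsup : (⨆ k, ((a k : ℝ) : EReal)) = c) :
    Tendsto (fun k => ENNReal.ofReal (-a k)) atTop (𝓝 (erealToENNReal (-c))) := by
  induction c using EReal.rec with
  | bot =>
      exact absurd (hsup ▸ le_iSup (fun k => ((a k : ℝ) : EReal)) 0)
        (EReal.bot_lt_coe (a 0)).not_ge
  | coe r =>
      have h1 : Tendsto (fun k => ((a k : ℝ) : EReal)) atTop (𝓝 (r : EReal)) := by
        rw [← hsup]
        exact tendsto_atTop_iSup (fun i j hij => EReal.coe_le_coe_iff.2 (hmono hij))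
      have h2 : Tendsto a atTop (𝓝 r) := EReal.tendsto_coe.1 h1
      have h3 : Tendsto (fun k => -a k) atTop (𝓝 (-r)) := h2.neg
      rw [← EReal.coe_neg, erealToENNReal_coe]
      exact (ENNReal.continuous_ofReal.tendsto _).comp h3
  | top =>
      rw [show -(⊤ : EReal) = ⊥ from rfl, erealToENNReal_bot]
      have h0 : ∃ k₀, (0 : ℝ) < a k₀ := by
        by_contra hcon
        push_neg at hcon
        have : (⨆ k, ((a k : ℝ) : EReal)) ≤ ((0 : ℝ) : EReal) :=
          iSup_le fun k => EReal.coe_le_coe_iff.2 (hcon k)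
        rw [hsup] at this
        exact (EReal.coe_lt_top 0).not_ge this
      obtain ⟨k₀, hk₀⟩ := h0
      refine Tendsto.congr' ?_ (tendsto_const_nhds (x := (0 : ℝ≥0∞)))
      filter_upwards [eventually_ge_atTop k₀] with k hk
      have : 0 < a k := lt_of_lt_of_le hk₀ (hmono hk)
      simp [ENNReal.ofReal_eq_zero, this.le]

lemma coe_ennreal_eq {x : ℝ≥0∞} (hx : x ≠ ⊤) : (x : EReal) = ((x.toReal : ℝ) : EReal) := by
  conv_lhs => rw [← ENNReal.ofReal_toReal hx]
  rw [EReal.coe_ennreal_ofReal, max_eq_left ENNReal.toReal_nonneg]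

lemma coe_sum {ι : Type*} (s : Finset ι) (f : ι → ℝ) :
    ((∑ i ∈ s, f i : ℝ) : EReal) = ∑ i ∈ s, ((f i : ℝ) : EReal) := by
  induction s using Finset.cons_induction with
  | empty => simp
  | cons i s his ih => rw [Finset.sum_cons, Finset.sum_cons, EReal.coe_add, ih]

lemma coe_le_liminf {a : ℕ → ℝ} {b : ℝ} (h : Tendsto a atTop (𝓝 b))
    {f : ℕ → EReal} (hle : ∀ᶠ N in atTop, ((a N : ℝ) : EReal) ≤ f N) :
    ((b : ℝ) : EReal) ≤ Filter.liminf f atTop := by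
  have h1 : Tendsto (fun N => ((a N : ℝ) : EReal)) atTop (𝓝 (b : EReal)) :=
    (continuous_coe_real_ereal.tendsto b).comp h
  rw [← h1.liminf_eq]
  exact liminf_le_liminf hle

/-! ### Empirical measures -/

lemma empMeasure_isProb {N : ℕ} (hN : 1 ≤ N) (X : Fin N → Euc d) :
    IsProbabilityMeasure (empMeasure X) := by
  constructor
  have hN0 : (N : ℝ≥0∞) ≠ 0 := Nat.cast_ne_zero.2 (by omega)
  rw [empMeasure, Measure.smul_apply, Measure.finset_sum_apply]
  simp only [measure_univ, Finset.sum_const, Finset.card_univ, Fintype.card_fin, nsmul_eq_mul,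
    mul_one, smul_eq_mul]
  exact ENNReal.inv_mul_cancel hN0 (ENNReal.natCast_ne_top N)

lemma integral_empMeasure {N : ℕ} (X : Fin N → Euc d) (f : Euc d →ᵇ ℝ) :
    ∫ x, f x ∂(empMeasure X) = (N : ℝ)⁻¹ * ∑ i, f (X i) := by
  rw [empMeasure, integral_smul_measure,
    integral_finset_sum_measure (fun i _ => f.integrable _)]
  simp only [integral_dirac, ENNReal.toReal_inv, ENNReal.toReal_natCast, smul_eq_mul]

/-! ### The smoothed potentials -/

noncomputable def Fb (φ : Euc d →ᵇ ℝ) (μ : Measure (Euc d)) (x : Euc d) : ℝ :=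
  ∫ y, φ (x - y) ∂μ

noncomputable def innerBCF (φ : Euc d →ᵇ ℝ) (x : Euc d) : Euc d →ᵇ ℝ :=
  φ.compContinuous ⟨fun y => x - y, (continuous_const.sub continuous_id)⟩

@[simp] lemma innerBCF_apply (φ : Euc d →ᵇ ℝ) (x y : Euc d) :
    innerBCF φ x y = φ (x - y) := rfl

lemma Fb_eq (φ : Euc d →ᵇ ℝ) (μ : Measure (Euc d)) (x : Euc d) :
    Fb φ μ x = ∫ y, innerBCF φ x y ∂μ := rfl

lemma abs_Fb_le (φ : Euc d →ᵇ ℝ) (μ : Measure (Euc d)) [IsProbabilityMeasure μ] (x : Euc d) :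
    |Fb φ μ x| ≤ ‖φ‖ := by
  rw [← Real.norm_eq_abs]
  calc ‖Fb φ μ x‖ ≤ ‖φ‖ * (μ Set.univ).toReal :=
        norm_integral_le_of_norm_le_const
          (Eventually.of_forall fun y => φ.norm_coe_le_norm (x - y))
    _ = ‖φ‖ := by simp

lemma lipschitz_Fb (φ : Euc d →ᵇ ℝ) {L : ℝ≥0} (hφ : LipschitzWith L φ)
    (μ : Measure (Euc d)) [IsProbabilityMeasure μ] :
    LipschitzWith L (Fb φ μ) := by
  apply LipschitzWith.of_dist_le_mul
  intro x x'
  have hint : ∀ z : Euc d, Integrable (fun y => φ (z - y)) μ := fun z =>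
    (innerBCF φ z).integrable μ
  rw [Real.dist_eq, Fb, Fb, ← integral_sub (hint x) (hint x')]
  calc |∫ y, (φ (x - y) - φ (x' - y)) ∂μ|
      ≤ ∫ y, |φ (x - y) - φ (x' - y)| ∂μ := by
        rw [← Real.norm_eq_abs]
        simpa [Real.norm_eq_abs] using norm_integral_le_integral_norm
          (μ := μ) (fun y => φ (x - y) - φ (x' - y))
    _ ≤ ∫ _y, (L : ℝ) * dist x x' ∂μ := by
        apply integral_mono (((hint x).sub (hint x')).abs) (integrable_const _)
        intro y
        have h1 := hφ.dist_le_mul (x - y) (x' - y)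
        have h2 : dist (x - y) (x' - y) = dist x x' := by
          rw [dist_eq_norm, dist_eq_norm, sub_sub_sub_cancel_right]
        rw [h2] at h1
        calc |φ (x - y) - φ (x' - y)| = dist (φ (x - y)) (φ (x' - y)) := (Real.dist_eq _ _).symm
          _ ≤ (L : ℝ) * dist x x' := h1
    _ = (L : ℝ) * dist x x' := by simp

noncomputable def FbBCF (φ : Euc d →ᵇ ℝ) {L : ℝ≥0} (hφ : LipschitzWith L φ)
    (μ : Measure (Euc d)) [IsProbabilityMeasure μ] : Euc d →ᵇ ℝ :=
  BoundedContinuousFunction.ofNormedAddCommGroup (Fb φ μ) (lipschitz_Fb φ hφ μ).continuous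
    ‖φ‖ (fun x => by rw [Real.norm_eq_abs]; exact abs_Fb_le φ μ x)

@[simp] lemma FbBCF_apply (φ : Euc d →ᵇ ℝ) {L : ℝ≥0} (hφ : LipschitzWith L φ)
    (μ : Measure (Euc d)) [IsProbabilityMeasure μ] (x : Euc d) :
    FbBCF φ hφ μ x = Fb φ μ x := rfl

/-! ### Tightness cutoff -/

lemma exists_cutoff (ρ : Measure (Euc d)) [IsProbabilityMeasure ρ] {ε : ℝ} (hε : 0 < ε) :
    ∃ g : Euc d →ᵇ ℝ, (∀ x, 0 ≤ g x) ∧ (∀ x, g x ≤ 1) ∧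
      (∃ R : ℝ, ∀ x : Euc d, R ≤ ‖x‖ → g x = 0) ∧ 1 - ε < ∫ x, g x ∂ρ := by
  have hmono : Monotone (fun n : ℕ => Metric.closedBall (0 : Euc d) n) := fun i j hij =>
    Metric.closedBall_subset_closedBall (by exact_mod_cast hij)
  have hU : ⋃ n : ℕ, Metric.closedBall (0 : Euc d) n = Set.univ := by
    ext x
    simp only [Set.mem_iUnion, Metric.mem_closedBall, dist_zero_right, Set.mem_univ, iff_true]
    exact exists_nat_ge ‖x‖
  have hT : Tendsto (fun n : ℕ => ρ (Metric.closedBall (0 : Euc d) n)) atTop (𝓝 1) := by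
    have := tendsto_measure_iUnion_atTop (μ := ρ) hmono
    rwa [hU, measure_univ] at this
  have hlt : ENNReal.ofReal (1 - ε) < 1 := by
    rcases le_or_gt (1 - ε) 0 with h | h
    · simp only [ENNReal.ofReal_eq_zero.2 h]; exact zero_lt_one
    · exact ENNReal.ofReal_lt_one.2 (by linarith)
  obtain ⟨n, hn⟩ := (hT.eventually_const_lt hlt).exists
  set gf : Euc d → ℝ := fun x => max 0 (min 1 ((n + 1 : ℝ) - ‖x‖)) with hgf
  have hgcont : Continuous gf :=
    continuous_const.max (continuous_const.min (continuous_const.sub continuous_norm))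
  have hg0 : ∀ x, 0 ≤ gf x := fun x => le_max_left _ _
  have hg1 : ∀ x, gf x ≤ 1 := fun x => max_le zero_le_one (min_le_left _ _)
  set g : Euc d →ᵇ ℝ := BoundedContinuousFunction.ofNormedAddCommGroup gf hgcont 1
    (fun x => by rw [Real.norm_eq_abs, abs_le]; exact ⟨by linarith [hg0 x], hg1 x⟩) with hg
  have hgapp : ∀ x, g x = gf x := fun x => rfl
  refine ⟨g, fun x => hg0 x, fun x => hg1 x, ⟨(n + 1 : ℝ), ?_⟩, ?_⟩
  · intro x hx
    show max 0 (min 1 ((n + 1 : ℝ) - ‖x‖)) = 0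
    have h0 : (n + 1 : ℝ) - ‖x‖ ≤ 0 := by linarith
    have h1 : min 1 ((n + 1 : ℝ) - ‖x‖) ≤ 0 := le_trans (min_le_right _ _) h0
    exact max_eq_left h1
  · have hind : ∀ x, Set.indicator (Metric.closedBall (0 : Euc d) n) (1 : Euc d → ℝ) x ≤ g x := by
      intro x
      rcases em (x ∈ Metric.closedBall (0 : Euc d) n) with hx | hx
      · rw [Set.indicator_of_mem hx]
        rw [Metric.mem_closedBall, dist_zero_right] at hx
        have h1 : min 1 ((n + 1 : ℝ) - ‖x‖) = 1 := min_eq_left (by linarith)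
        show (1 : ℝ) ≤ max 0 (min 1 ((n + 1 : ℝ) - ‖x‖))
        rw [h1]
        exact le_max_right _ _
      · rw [Set.indicator_of_notMem hx]
        exact hg0 x
    have hint : ∫ x, Set.indicator (Metric.closedBall (0 : Euc d) n) (1 : Euc d → ℝ) x ∂ρ
        = (ρ (Metric.closedBall (0 : Euc d) n)).toReal := by
      rw [MeasureTheory.integral_indicator_one Metric.isClosed_closedBall.measurableSet]; rfl
    have hmon : (ρ (Metric.closedBall (0 : Euc d) n)).toReal ≤ ∫ x, g x ∂ρ := by
      rw [← hint]
      exact integral_mono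
        ((integrable_const (1 : ℝ)).indicator Metric.isClosed_closedBall.measurableSet)
        (g.integrable ρ) hind
    have hne : ρ (Metric.closedBall (0 : Euc d) n) ≠ ⊤ := measure_ne_top ρ _
    have h3 : (ENNReal.ofReal (1 - ε)).toReal < (ρ (Metric.closedBall (0 : Euc d) n)).toReal :=
      ENNReal.toReal_strict_mono hne hn
    have h4 : 1 - ε ≤ (ENNReal.ofReal (1 - ε)).toReal := by
      rcases le_or_gt (1 - ε) 0 with h | h
      · rw [ENNReal.ofReal_eq_zero.2 h]; simpa using h
      · rw [ENNReal.toReal_ofReal h.le]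
    linarith

/-! ### Uniform smallness on compact sets -/

lemma eventually_uniform_small {K : Set (Euc d)} (hK : IsCompact K)
    (G : ℕ → Euc d → ℝ) {L : ℝ≥0}
    (hG : ∀ᶠ n in atTop, LipschitzWith L (G n))
    (hpt : ∀ x, Tendsto (fun n => G n x) atTop (𝓝 0))
    {ε : ℝ} (hε : 0 < ε) :
    ∀ᶠ n in atTop, ∀ x ∈ K, |G n x| ≤ ε := by
  have hr : 0 < ε / (2 * ((L : ℝ) + 1)) := by positivity
  set r := ε / (2 * ((L : ℝ) + 1)) with hrdef
  obtain ⟨t, htK, hcover⟩ := hK.elim_nhds_subcover (fun c => Metric.ball c r)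
    (fun c _ => Metric.ball_mem_nhds c hr)
  have hev : ∀ᶠ n in atTop, ∀ c ∈ t, |G n c| ≤ ε / 2 := by
    rw [eventually_all_finset]
    intro c _
    have h3 : ∀ᶠ n in atTop, G n c ∈ Metric.ball (0 : ℝ) (ε / 2) :=
      (hpt c).eventually (Metric.ball_mem_nhds _ (half_pos hε))
    filter_upwards [h3] with n hn
    rw [Metric.mem_ball, Real.dist_eq, sub_zero] at hn
    exact hn.le
  filter_upwards [hev, hG] with n hn hlip x hx
  obtain ⟨c, hct, hxc⟩ : ∃ c ∈ t, x ∈ Metric.ball c r := by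
    have := hcover hx
    simpa using this
  have h1 : |G n x - G n c| ≤ (L : ℝ) * r := by
    have hd := hlip.dist_le_mul x c
    rw [Real.dist_eq] at hd
    exact hd.trans (mul_le_mul_of_nonneg_left (Metric.mem_ball.1 hxc).le L.coe_nonneg)
  have h2 : (L : ℝ) * r ≤ ε / 2 := by
    have hL1 : (0 : ℝ) < (L : ℝ) + 1 := by positivity
    calc (L : ℝ) * r ≤ ((L : ℝ) + 1) * r := by
          apply mul_le_mul_of_nonneg_right (by linarith) hr.le
      _ = ε / 2 := by rw [hrdef]; field_simp
  calc |G n x| = |G n c + (G n x - G n c)| := by ring_nf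
    _ ≤ |G n c| + |G n x - G n c| := abs_add_le _ _
    _ ≤ ε / 2 + ε / 2 := add_le_add (hn c hct) (h1.trans h2)
    _ = ε := by ring

/-! ### Lipschitz approximation of a lower semicontinuous potential -/

lemma exists_lipschitz_approx (W : Euc d → EReal) (Wmin : ℝ)
    (hW : LowerSemicontinuous W) (hWb : ∀ x, (Wmin : EReal) ≤ W x) :
    ∃ φ : ℕ → Euc d → ℝ,
      (∀ k : ℕ, LipschitzWith k (φ k)) ∧
      (∀ k x, min Wmin 0 ≤ φ k x) ∧
      (∀ k x, φ k x ≤ k) ∧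
      (∀ k x, φ k x ≤ φ (k + 1) x) ∧
      (∀ k x, ((φ k x : ℝ) : EReal) ≤ W x) ∧
      (∀ x, (⨆ k, ((φ k x : ℝ) : EReal)) = W x) := by
  set B : ℝ := min Wmin 0 with hBdef
  set w : ℕ → Euc d → ℝ := fun k x => (min (W x) ((k : ℝ) : EReal)).toReal with hwdef
  have hWbot : ∀ x, W x ≠ ⊥ := fun x =>
    ne_of_gt (lt_of_lt_of_le (EReal.bot_lt_coe Wmin) (hWb x))
  have hwne_top : ∀ (k : ℕ) x, min (W x) ((k : ℝ) : EReal) ≠ ⊤ := fun k x =>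
    ne_of_lt (lt_of_le_of_lt (min_le_right _ _) (EReal.coe_lt_top _))
  have hwne_bot : ∀ (k : ℕ) x, min (W x) ((k : ℝ) : EReal) ≠ ⊥ := fun k x =>
    ne_of_gt (lt_min (bot_lt_iff_ne_bot.2 (hWbot x)) (EReal.bot_lt_coe _))
  have hwcoe : ∀ (k : ℕ) x, ((w k x : ℝ) : EReal) = min (W x) ((k : ℝ) : EReal) := fun k x =>
    EReal.coe_toReal (hwne_top k x) (hwne_bot k x)
  have hwlo : ∀ (k : ℕ) x, B ≤ w k x := by
    intro k x
    have h1 : ((B : ℝ) : EReal) ≤ min (W x) ((k : ℝ) : EReal) :=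
      le_min (le_trans (EReal.coe_le_coe_iff.2 (min_le_left _ _)) (hWb x))
        (EReal.coe_le_coe_iff.2 (le_trans (min_le_right _ _) (Nat.cast_nonneg k)))
    rw [← hwcoe k x] at h1
    exact EReal.coe_le_coe_iff.1 h1
  have hwhi : ∀ (k : ℕ) x, w k x ≤ k := by
    intro k x
    have : ((w k x : ℝ) : EReal) ≤ (((k : ℕ) : ℝ) : EReal) := by
      rw [hwcoe]; exact min_le_right _ _
    exact EReal.coe_le_coe_iff.1 this
  have hwmono : ∀ (k l : ℕ), k ≤ l → ∀ x, w k x ≤ w l x := by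
    intro k l hkl x
    have : ((w k x : ℝ) : EReal) ≤ ((w l x : ℝ) : EReal) := by
      rw [hwcoe, hwcoe]
      exact min_le_min le_rfl (EReal.coe_le_coe_iff.2 (by exact_mod_cast hkl))
    exact EReal.coe_le_coe_iff.1 this
  have hwlsc : ∀ (k : ℕ) (x : Euc d) (s : ℝ), s < w k x → ∀ᶠ y in 𝓝 x, s < w k y := by
    intro k x s hs
    have hcoe : ((s : ℝ) : EReal) < min (W x) ((k : ℝ) : EReal) := by
      rw [← hwcoe k x]
      exact EReal.coe_lt_coe_iff.2 hs
    have h1 : ((s : ℝ) : EReal) < W x := lt_of_lt_of_le hcoe (min_le_left _ _)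
    have h2 : ((s : ℝ) : EReal) < ((k : ℝ) : EReal) := lt_of_lt_of_le hcoe (min_le_right _ _)
    filter_upwards [hW x _ h1] with y hy
    have : ((s : ℝ) : EReal) < min (W y) ((k : ℝ) : EReal) := lt_min hy h2
    rw [← hwcoe k y] at this
    exact EReal.coe_lt_coe_iff.1 this
  set φ : ℕ → Euc d → ℝ := fun k x => ⨅ y : Euc d, (w k y + k * dist x y) with hφdef
  have hbdd : ∀ (k : ℕ) x, BddBelow (Set.range fun y => w k y + (k : ℝ) * dist x y) := by
    intro k x
    refine ⟨B, ?_⟩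
    rintro s ⟨y, rfl⟩
    show B ≤ w k y + (k : ℝ) * dist x y
    have h1 := hwlo k y
    have h2 : 0 ≤ (k : ℝ) * dist x y := mul_nonneg (Nat.cast_nonneg k) dist_nonneg
    linarith
  have hφlo : ∀ (k : ℕ) x, B ≤ φ k x := by
    intro k x
    apply le_ciInf
    intro y
    show B ≤ w k y + (k : ℝ) * dist x y
    have h1 := hwlo k y
    have h2 : 0 ≤ (k : ℝ) * dist x y := mul_nonneg (Nat.cast_nonneg k) dist_nonneg
    linarith
  have hφle_w : ∀ (k : ℕ) x, φ k x ≤ w k x := by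
    intro k x
    have := ciInf_le (hbdd k x) x
    simpa using this
  have hφhi : ∀ (k : ℕ) x, φ k x ≤ k := fun k x => (hφle_w k x).trans (hwhi k x)
  have hφmono : ∀ (k l : ℕ), k ≤ l → ∀ x, φ k x ≤ φ l x := by
    intro k l hkl x
    apply ciInf_mono (hbdd k x)
    intro y
    show w k y + (k : ℝ) * dist x y ≤ w l y + (l : ℝ) * dist x y
    have h1 := hwmono k l hkl y
    have h2 : ((k : ℕ) : ℝ) * dist x y ≤ ((l : ℕ) : ℝ) * dist x y :=
      mul_le_mul_of_nonneg_right (by exact_mod_cast hkl) dist_nonneg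
    linarith
  have hφlipkey : ∀ (k : ℕ) (x x' : Euc d), φ k x ≤ φ k x' + k * dist x x' := by
    intro k x x'
    have hstep : ∀ y, φ k x - (k : ℝ) * dist x x' ≤ w k y + (k : ℝ) * dist x' y := by
      intro y
      have h1 : φ k x ≤ w k y + (k : ℝ) * dist x y := ciInf_le (hbdd k x) y
      have h2 : dist x y ≤ dist x x' + dist x' y := dist_triangle x x' y
      have h3 : (k : ℝ) * dist x y ≤ (k : ℝ) * (dist x x' + dist x' y) :=
        mul_le_mul_of_nonneg_left h2 (Nat.cast_nonneg k)
      nlinarith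
    have h4 : φ k x - (k : ℝ) * dist x x' ≤ φ k x' := le_ciInf hstep
    linarith
  have hφlip : ∀ k : ℕ, LipschitzWith k (φ k) := by
    intro k
    apply LipschitzWith.of_dist_le_mul
    intro x x'
    rw [Real.dist_eq, abs_sub_le_iff]
    have hc : (((k : ℕ) : ℝ≥0) : ℝ) = ((k : ℕ) : ℝ) := by simp
    rw [hc]
    constructor
    · have := hφlipkey k x x'
      linarith
    · have := hφlipkey k x' x
      rw [dist_comm x' x] at this
      linarith
  have hφleW : ∀ (k : ℕ) x, ((φ k x : ℝ) : EReal) ≤ W x := by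
    intro k x
    refine le_trans (EReal.coe_le_coe_iff.2 (hφle_w k x)) ?_
    rw [hwcoe]
    exact min_le_left _ _
  refine ⟨φ, hφlip, hφlo, hφhi, fun k x => hφmono k (k + 1) (Nat.le_succ k) x, hφleW, ?_⟩
  intro x
  refine le_antisymm (iSup_le fun k => hφleW k x) ?_
  by_contra hcon
  push_neg at hcon
  obtain ⟨s, hs1, hs2⟩ := EReal.exists_between_coe_real hcon
  obtain ⟨k₀, hk₀⟩ := exists_nat_gt s
  have hwt : s < w k₀ x := by
    have : ((s : ℝ) : EReal) < min (W x) ((k₀ : ℝ) : EReal) :=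
      lt_min hs2 (EReal.coe_lt_coe_iff.2 hk₀)
    rw [← hwcoe k₀ x] at this
    exact EReal.coe_lt_coe_iff.1 this
  obtain ⟨δ, hδpos, hδ⟩ := Metric.eventually_nhds_iff.1 (hwlsc k₀ x s hwt)
  obtain ⟨m, hm⟩ := exists_nat_ge ((s - B) / δ)
  set K := max k₀ m with hK
  have hKφ : s ≤ φ K x := by
    apply le_ciInf
    intro y
    show s ≤ w K y + (K : ℝ) * dist x y
    rcases lt_or_ge (dist y x) δ with hy | hy
    · have h1 : s < w k₀ y := hδ hy
      have h2 : w k₀ y ≤ w K y := hwmono k₀ K (le_max_left _ _) y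
      have h3 : 0 ≤ (K : ℝ) * dist x y := mul_nonneg (Nat.cast_nonneg K) dist_nonneg
      linarith
    · have h1 : B ≤ w K y := hwlo K y
      have h2 : (m : ℝ) * δ ≤ (K : ℝ) * dist x y := by
        apply mul_le_mul (by exact_mod_cast le_max_right k₀ m)
          (by rw [dist_comm]; exact hy) hδpos.le (Nat.cast_nonneg K)
      have h3 : s - B ≤ (m : ℝ) * δ := by
        rw [div_le_iff₀ hδpos] at hm
        linarith
      linarith
  have hfin : ((s : ℝ) : EReal) ≤ ⨆ k, ((φ k x : ℝ) : EReal) :=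
    le_trans (EReal.coe_le_coe_iff.2 hKφ) (le_iSup (fun k => ((φ k x : ℝ) : EReal)) K)
  exact absurd (lt_of_le_of_lt hfin hs1) (lt_irrefl _)


/-! ### The key per-test-function liminf estimate -/

lemma step_liminf (W : Euc d → EReal)
    (ρ : Measure (Euc d)) [IsProbabilityMeasure ρ]
    (X : (N : ℕ) → Fin N → Euc d)
    (hconv : NarrowTendsto (fun N => empMeasure (X N)) ρ)
    (φ : Euc d →ᵇ ℝ) {L : ℝ≥0} (hφL : LipschitzWith L φ)
    (hφW : ∀ x, ((φ x : ℝ) : EReal) ≤ W x) :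
    ((1 / 2 * ∫ x, Fb φ ρ x ∂ρ : ℝ) : EReal) ≤
      Filter.liminf (fun N => discEnergy W N (X N)) atTop := by
  set μ : ℕ → Measure (Euc d) := fun N => empMeasure (X N) with hμdef
  set J : ℕ → ℝ := fun N => ∫ x, Fb φ (μ N) x ∂(μ N) with hJdef
  -- Step 1 : per-N inequality
  have hEnergy : ∀ N : ℕ, 1 ≤ N →
      ((1 / 2 * J N - φ 0 / (2 * (N : ℝ)) : ℝ) : EReal) ≤ discEnergy W N (X N) := by
    intro N hN
    haveI := empMeasure_isProb hN (X N)
    have hNR : (N : ℝ) ≠ 0 := Nat.cast_ne_zero.2 (by omega)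
    set S : ℝ := ∑ i : Fin N, ∑ j ∈ Finset.univ.erase i, φ (X N i - X N j) with hSdef
    have hcoeS : ((1 / (2 * (N : ℝ) ^ 2) * S : ℝ) : EReal) ≤ discEnergy W N (X N) := by
      have hsum : ((S : ℝ) : EReal) ≤
          ∑ i : Fin N, ∑ j ∈ Finset.univ.erase i, W (X N i - X N j) := by
        rw [hSdef, coe_sum]
        refine Finset.sum_le_sum fun i _ => ?_
        rw [coe_sum]
        exact Finset.sum_le_sum fun j _ => hφW _
      calc ((1 / (2 * (N : ℝ) ^ 2) * S : ℝ) : EReal)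
          = ((1 / (2 * (N : ℝ) ^ 2) : ℝ) : EReal) * ((S : ℝ) : EReal) := EReal.coe_mul _ _
        _ ≤ ((1 / (2 * (N : ℝ) ^ 2) : ℝ) : EReal) *
            ∑ i : Fin N, ∑ j ∈ Finset.univ.erase i, W (X N i - X N j) :=
            mul_le_mul_of_nonneg_left hsum (EReal.coe_nonneg.2 (by positivity))
        _ = discEnergy W N (X N) := rfl
    have hFbi : ∀ i : Fin N, Fb φ (μ N) (X N i)
        = (N : ℝ)⁻¹ * ((∑ j ∈ Finset.univ.erase i, φ (X N i - X N j)) + φ 0) := by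
      intro i
      have h := integral_empMeasure (X N) (innerBCF φ (X N i))
      simp only [innerBCF_apply] at h
      have hrow : ∑ j : Fin N, φ (X N i - X N j)
          = (∑ j ∈ Finset.univ.erase i, φ (X N i - X N j)) + φ 0 := by
        rw [← Finset.sum_erase_add Finset.univ _ (Finset.mem_univ i), sub_self]
      rw [show Fb φ (μ N) (X N i) = ∫ y, φ (X N i - y) ∂(μ N) from rfl]
      rw [h, hrow]
    have hJN : J N = (N : ℝ)⁻¹ * ∑ i, Fb φ (μ N) (X N i) := by
      have h := integral_empMeasure (X N) (FbBCF φ hφL (μ N))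
      simpa only [FbBCF_apply] using h
    have hJval : J N = (N : ℝ)⁻¹ * ((N : ℝ)⁻¹ * (S + N * φ 0)) := by
      rw [hJN]
      have : ∑ i, Fb φ (μ N) (X N i)
          = ∑ i : Fin N, (N : ℝ)⁻¹ * ((∑ j ∈ Finset.univ.erase i, φ (X N i - X N j)) + φ 0) :=
        Finset.sum_congr rfl fun i _ => hFbi i
      rw [this, ← Finset.mul_sum, Finset.sum_add_distrib, Finset.sum_const, Finset.card_univ,
        Fintype.card_fin, nsmul_eq_mul, ← hSdef]
    have hEQ : 1 / 2 * J N - φ 0 / (2 * (N : ℝ)) = 1 / (2 * (N : ℝ) ^ 2) * S := by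
      rw [hJval]
      field_simp
      ring
    rw [hEQ]
    exact hcoeS
  -- Step 2 : the double integrals converge
  set Jρ : ℝ := ∫ x, Fb φ ρ x ∂ρ with hJρdef
  set M : ℝ := ‖φ‖ with hMdef
  have hM : 0 ≤ M := norm_nonneg φ
  have hJconv : Tendsto J atTop (𝓝 Jρ) := by
    rw [Metric.tendsto_atTop]
    intro ε hε
    have hεM : 0 < ε / (8 * (M + 1)) := by positivity
    obtain ⟨g, hg0, hg1, ⟨R, hgR⟩, hgint⟩ := exists_cutoff ρ hεM
    set K : Set (Euc d) := Metric.closedBall (0 : Euc d) R with hKdef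
    have hKcomp : IsCompact K := isCompact_closedBall _ _
    set G : ℕ → Euc d → ℝ := fun N x => Fb φ (μ N) x - Fb φ ρ x with hGdef
    have hGpt : ∀ x, Tendsto (fun N => G N x) atTop (𝓝 0) := by
      intro x
      have h1 := (hconv (innerBCF φ x)).sub
        (tendsto_const_nhds (x := ∫ y, innerBCF φ x y ∂ρ) (f := atTop))
      rw [sub_self] at h1
      exact h1
    have hGlip : ∀ᶠ N in atTop, LipschitzWith (L + L) (G N) := by
      filter_upwards [eventually_ge_atTop 1] with N hN
      haveI := empMeasure_isProb hN (X N)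
      exact (lipschitz_Fb φ hφL (μ N)).sub (lipschitz_Fb φ hφL ρ)
    have huni := eventually_uniform_small hKcomp G hGlip hGpt (show 0 < ε / 4 by positivity)
    have hgconv : ∀ᶠ N in atTop, 1 - ε / (8 * (M + 1)) < ∫ x, g x ∂(μ N) :=
      (hconv g).eventually_const_lt hgint
    have hsecond : ∀ᶠ N in atTop,
        |(∫ x, Fb φ ρ x ∂(μ N)) - ∫ x, Fb φ ρ x ∂ρ| < ε / 4 := by
      have h1 := (hconv (FbBCF φ hφL ρ)).sub
        (tendsto_const_nhds (x := ∫ x, FbBCF φ hφL ρ x ∂ρ) (f := atTop))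
      rw [sub_self] at h1
      have h2 := h1.eventually (Metric.ball_mem_nhds (0 : ℝ) (show 0 < ε / 4 by positivity))
      filter_upwards [h2] with N hN
      rw [Real.dist_eq, sub_zero] at hN
      exact hN
    rw [Filter.eventually_atTop] at huni hgconv hsecond
    obtain ⟨N₁, hN₁⟩ := huni
    obtain ⟨N₂, hN₂⟩ := hgconv
    obtain ⟨N₃, hN₃⟩ := hsecond
    refine ⟨max (max N₁ N₂) (max N₃ 1), fun N hNN => ?_⟩
    have hN1 : N₁ ≤ N := le_trans (le_trans (le_max_left _ _) (le_max_left _ _)) hNN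
    have hN2 : N₂ ≤ N := le_trans (le_trans (le_max_right _ _) (le_max_left _ _)) hNN
    have hN3 : N₃ ≤ N := le_trans (le_trans (le_max_left _ _) (le_max_right _ _)) hNN
    have hNpos : 1 ≤ N := le_trans (le_trans (le_max_right _ _) (le_max_right _ _)) hNN
    haveI := empMeasure_isProb hNpos (X N)
    have hu := hN₁ N hN1
    have hgc := hN₂ N hN2
    have hs := hN₃ N hN3
    -- first term bound
    have hb1 : |∫ x, G N x ∂(μ N)| ≤ ε / 4 + 2 * M * (1 - ∫ x, g x ∂(μ N)) := by
      have hint1 : Integrable (Fb φ (μ N)) (μ N) := (FbBCF φ hφL (μ N)).integrable (μ N)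
      have hint2 : Integrable (Fb φ ρ) (μ N) := (FbBCF φ hφL ρ).integrable (μ N)
      have hGint : Integrable (G N) (μ N) := hint1.sub hint2
      have hpt : ∀ x, |G N x| ≤ ε / 4 + 2 * M * (1 - g x) := by
        intro x
        rcases le_or_gt ‖x‖ R with hx | hx
        · have hmem : x ∈ K := by
            rw [hKdef, Metric.mem_closedBall, dist_zero_right]
            exact hx
          have h1 : |G N x| ≤ ε / 4 := hu x hmem
          have h2 : 0 ≤ 2 * M * (1 - g x) := by
            have := hg1 x
            nlinarith
          linarith
        · have h0 : g x = 0 := hgR x hx.le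
          have h1 : |G N x| ≤ 2 * M := by
            have ha := abs_Fb_le φ (μ N) x
            have hb := abs_Fb_le φ ρ x
            calc |G N x| ≤ |Fb φ (μ N) x| + |Fb φ ρ x| := abs_sub _ _
              _ ≤ 2 * M := by rw [hMdef]; linarith
          rw [h0]
          linarith
      have hgi : Integrable (fun x => 1 - g x) (μ N) :=
        (integrable_const (1 : ℝ)).sub (g.integrable (μ N))
      have hgi2 : Integrable (fun x => 2 * M * (1 - g x)) (μ N) := hgi.const_mul (2 * M)
      have hrhsint : Integrable (fun x => ε / 4 + 2 * M * (1 - g x)) (μ N) :=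
        (integrable_const (ε / 4)).add hgi2
      calc |∫ x, G N x ∂(μ N)| ≤ ∫ x, |G N x| ∂(μ N) := by
            rw [← Real.norm_eq_abs]
            simpa [Real.norm_eq_abs] using norm_integral_le_integral_norm (μ := μ N) (G N)
        _ ≤ ∫ x, (ε / 4 + 2 * M * (1 - g x)) ∂(μ N) :=
            integral_mono hGint.abs hrhsint hpt
        _ = ε / 4 + 2 * M * (1 - ∫ x, g x ∂(μ N)) := by
            rw [integral_add (integrable_const _) hgi2, integral_const_mul,
              integral_sub (integrable_const (1 : ℝ)) (g.integrable (μ N)),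
              integral_const]
            simp [measure_univ]
    have hsplit : J N - Jρ = (∫ x, G N x ∂(μ N)) + ((∫ x, Fb φ ρ x ∂(μ N)) - ∫ x, Fb φ ρ x ∂ρ) := by
      rw [hJdef, hJρdef]
      have : ∫ x, G N x ∂(μ N) = (∫ x, Fb φ (μ N) x ∂(μ N)) - ∫ x, Fb φ ρ x ∂(μ N) :=
        integral_sub ((FbBCF φ hφL (μ N)).integrable (μ N)) ((FbBCF φ hφL ρ).integrable (μ N))
      rw [this]
      ring
    have hterm2 : 2 * M * (1 - ∫ x, g x ∂(μ N)) ≤ 2 * M * (ε / (8 * (M + 1))) := by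
      apply mul_le_mul_of_nonneg_left _ (by positivity)
      linarith
    have hterm2' : 2 * M * (ε / (8 * (M + 1))) ≤ ε / 4 := by
      have h8 : (0 : ℝ) < M + 1 := by linarith
      have key : 2 * M * (ε / (8 * (M + 1))) = (M / (M + 1)) * (ε / 4) := by
        field_simp
        ring
      rw [key]
      have hle : M / (M + 1) ≤ 1 := by
        rw [div_le_one h8]
        linarith
      calc (M / (M + 1)) * (ε / 4) ≤ 1 * (ε / 4) :=
            mul_le_mul_of_nonneg_right hle (by positivity)
        _ = ε / 4 := one_mul _
    rw [Real.dist_eq, hsplit]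
    calc |(∫ x, G N x ∂(μ N)) + ((∫ x, Fb φ ρ x ∂(μ N)) - ∫ x, Fb φ ρ x ∂ρ)|
        ≤ |∫ x, G N x ∂(μ N)| + |(∫ x, Fb φ ρ x ∂(μ N)) - ∫ x, Fb φ ρ x ∂ρ| := abs_add_le _ _
      _ < (ε / 4 + 2 * M * (1 - ∫ x, g x ∂(μ N))) + ε / 4 := by
          exact add_lt_add_of_le_of_lt hb1 hs
      _ ≤ ε / 4 + ε / 4 + ε / 4 := by linarith
      _ < ε := by linarith
  -- Step 3 : conclude
  have h3 : Tendsto (fun N : ℕ => φ 0 / (2 * (N : ℝ))) atTop (𝓝 0) := by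
    have := tendsto_const_div_atTop_nhds_zero_nat (φ 0 / 2)
    refine this.congr fun n => ?_
    rw [div_div]
  have hTend : Tendsto (fun N => 1 / 2 * J N - φ 0 / (2 * (N : ℝ))) atTop (𝓝 (1 / 2 * Jρ)) := by
    have h4 := (hJconv.const_mul (1 / 2 : ℝ)).sub h3
    simpa using h4
  exact coe_le_liminf hTend (by
    filter_upwards [eventually_ge_atTop 1] with N hN
    exact hEnergy N hN)

end EnergyAux


open MeasureTheory Filter Topology BoundedContinuousFunction EnergyAux in
/-- liminf inequality: if the empirical measures of `X_N` converge narrowly to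
`ρ`, then `E(ρ) ≤ liminf_N E_N(X_N)`. -/
theorem liminf_inequality_for_discrete_energy
    {d : ℕ} (hd : 0 < d) (W : Euc d → EReal) (Wmin : ℝ) (Winf : EReal) (RW : ℝ)
    (h1 : Hyp1 W Wmin) (h2 : Hyp2 W Winf RW)
    (h3 : Hyp3a W ∨ ∃ β C_W : ℝ, Hyp3b W β C_W)
    (ρ : Measure (Euc d)) (hρ : IsProbabilityMeasure ρ)
    (X : (N : ℕ) → Fin N → Euc d)
    (hconv : NarrowTendsto (fun N => empMeasure (X N)) ρ) :
    contEnergy W ρ ≤ Filter.liminf (fun N => discEnergy W N (X N)) atTop := by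
  classical
  haveI := hρ
  obtain ⟨hWlsc, hWmin, _⟩ := h1
  obtain ⟨φ, hLip, hlo, hhi, hsucc, hleW, hsup⟩ := exists_lipschitz_approx W Wmin hWlsc hWmin
  set B : ℝ := min Wmin 0 with hBdef
  have hB0 : B ≤ 0 := min_le_right _ _
  have hφmono : ∀ (k l : ℕ), k ≤ l → ∀ x, φ k x ≤ φ l x := by
    intro k l hkl
    have : Monotone fun k => φ k := monotone_nat_of_le_succ (fun k => by
      intro x; exact hsucc k x)
    exact fun x => this hkl x
  -- bounded continuous versions
  set φB : ℕ → (Euc d →ᵇ ℝ) := fun k =>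
    BoundedContinuousFunction.ofNormedAddCommGroup (φ k) (hLip k).continuous
      (max (-B) (k : ℝ)) (fun x => by
        rw [Real.norm_eq_abs, abs_le]
        constructor
        · have h1 := hlo k x
          have h2 : -(max (-B) (k : ℝ)) ≤ B := by
            have := le_max_left (-B) (k : ℝ)
            linarith
          linarith
        · exact le_trans (hhi k x) (le_max_right _ _)) with hφB
  have hφBapp : ∀ k x, φB k x = φ k x := fun k x => rfl
  set L : EReal := Filter.liminf (fun N => discEnergy W N (X N)) atTop with hLdef
  -- per-k lower bound on L
  have hk : ∀ k : ℕ, ((1 / 2 * ∫ x, Fb (φB k) ρ x ∂ρ : ℝ) : EReal) ≤ L :=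
    fun k => step_liminf W ρ X hconv (φB k) (hLip k) (fun x => hleW k x)
  -- Fubini
  set subCM : C(Euc d × Euc d, Euc d) :=
    ⟨fun p => p.1 - p.2, (continuous_fst.sub continuous_snd)⟩ with hsubCM
  set φP : ℕ → (Euc d × Euc d →ᵇ ℝ) := fun k => (φB k).compContinuous subCM with hφP
  have hφPapp : ∀ k (z : Euc d × Euc d), φP k z = φ k (z.1 - z.2) := fun k z => rfl
  set Ip : ℕ → ℝ := fun k => ∫ z, φ k (z.1 - z.2) ∂(ρ.prod ρ) with hIp
  have hFub : ∀ k, Ip k = ∫ x, Fb (φB k) ρ x ∂ρ := by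
    intro k
    rw [hIp]
    exact integral_prod _ ((φP k).integrable (ρ.prod ρ))
  -- lintegral pieces
  set P : ℝ≥0∞ := ∫⁻ z, erealToENNReal (W (z.1 - z.2)) ∂(ρ.prod ρ) with hP
  set Nn : ℝ≥0∞ := ∫⁻ z, erealToENNReal (-W (z.1 - z.2)) ∂(ρ.prod ρ) with hNn
  set Pk : ℕ → ℝ≥0∞ := fun k => ∫⁻ z, ENNReal.ofReal (φ k (z.1 - z.2)) ∂(ρ.prod ρ) with hPk
  set Nk : ℕ → ℝ≥0∞ := fun k => ∫⁻ z, ENNReal.ofReal (-φ k (z.1 - z.2)) ∂(ρ.prod ρ) with hNk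
  have hmeas : ∀ k, Measurable fun z : Euc d × Euc d => ENNReal.ofReal (φ k (z.1 - z.2)) :=
    fun k => ENNReal.measurable_ofReal.comp
      ((hLip k).continuous.comp (continuous_fst.sub continuous_snd)).measurable
  have hmeasn : ∀ k, Measurable fun z : Euc d × Euc d => ENNReal.ofReal (-φ k (z.1 - z.2)) :=
    fun k => ENNReal.measurable_ofReal.comp
      ((hLip k).continuous.comp (continuous_fst.sub continuous_snd)).measurable.neg
  have hPk_le : ∀ k, Pk k ≤ ENNReal.ofReal (k : ℝ) := by
    intro k
    calc Pk k ≤ ∫⁻ _z, ENNReal.ofReal (k : ℝ) ∂(ρ.prod ρ) :=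
        lintegral_mono fun z => ENNReal.ofReal_le_ofReal (hhi k _)
      _ = ENNReal.ofReal (k : ℝ) := by
        rw [lintegral_const, measure_univ, mul_one]
  have hNk_le : ∀ k, Nk k ≤ ENNReal.ofReal (-B) := by
    intro k
    calc Nk k ≤ ∫⁻ _z, ENNReal.ofReal (-B) ∂(ρ.prod ρ) :=
        lintegral_mono fun z => ENNReal.ofReal_le_ofReal (by
          have := hlo k (z.1 - z.2); linarith)
      _ = ENNReal.ofReal (-B) := by
        rw [lintegral_const, measure_univ, mul_one]
  have hPsup : P = ⨆ k, Pk k := by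
    have hmono' : Monotone fun (k : ℕ) (z : Euc d × Euc d) => ENNReal.ofReal (φ k (z.1 - z.2)) :=
      fun i j hij => fun z => ENNReal.ofReal_le_ofReal (hφmono i j hij _)
    rw [hPk, ← lintegral_iSup hmeas hmono', hP]
    congr 1
    funext z
    exact (iSup_ofReal_eq (fun i j hij => hφmono i j hij (z.1 - z.2)) (hsup (z.1 - z.2))).symm
  have hNtend : Tendsto Nk atTop (𝓝 Nn) := by
    rw [hNk, hNn]
    apply tendsto_lintegral_of_dominated_convergence (fun _ => ENNReal.ofReal (-B)) hmeasn
    · exact fun k => Filter.Eventually.of_forall fun z => ENNReal.ofReal_le_ofReal (by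
        have := hlo k (z.1 - z.2); linarith)
    · rw [lintegral_const, measure_univ, mul_one]
      exact ENNReal.ofReal_ne_top
    · exact Filter.Eventually.of_forall fun z =>
        tendsto_ofReal_neg (fun i j hij => hφmono i j hij (z.1 - z.2)) (hsup (z.1 - z.2))
  have hNn_le : Nn ≤ ENNReal.ofReal (-B) := by
    calc Nn ≤ ∫⁻ _z, ENNReal.ofReal (-B) ∂(ρ.prod ρ) := by
          apply lintegral_mono
          intro z
          have h1 : -W (z.1 - z.2) ≤ ((-B : ℝ) : EReal) := by
            rw [EReal.coe_neg]
            rw [EReal.neg_le_neg_iff]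
            exact le_trans (EReal.coe_le_coe_iff.2 (min_le_left Wmin 0)) (hWmin _)
          calc erealToENNReal (-W (z.1 - z.2)) ≤ erealToENNReal ((-B : ℝ) : EReal) :=
              erealToENNReal_mono h1
            _ = ENNReal.ofReal (-B) := erealToENNReal_coe _
      _ = ENNReal.ofReal (-B) := by rw [lintegral_const, measure_univ, mul_one]
  have hNn_ne : Nn ≠ ⊤ := ne_top_of_le_ne_top ENNReal.ofReal_ne_top hNn_le
  have hNk_ne : ∀ k, Nk k ≠ ⊤ := fun k => ne_top_of_le_ne_top ENNReal.ofReal_ne_top (hNk_le k)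
  have hPk_ne : ∀ k, Pk k ≠ ⊤ := fun k => ne_top_of_le_ne_top ENNReal.ofReal_ne_top (hPk_le k)
  have hIpk : ∀ k, Ip k = (Pk k).toReal - (Nk k).toReal := by
    intro k
    rw [hIp]
    exact integral_eq_lintegral_pos_part_sub_lintegral_neg_part ((φP k).integrable (ρ.prod ρ))
  have hmonoP : Monotone Pk := fun i j hij =>
    lintegral_mono fun z => ENNReal.ofReal_le_ofReal (hφmono i j hij _)
  have hPk_tend : Tendsto Pk atTop (𝓝 P) := hPsup ▸ tendsto_atTop_iSup hmonoP
  -- convergence of Ip to P - Nn in EReal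
  have hIpTend : Tendsto (fun k => ((Ip k : ℝ) : EReal)) atTop
      (𝓝 ((P : EReal) - (Nn : EReal))) := by
    rcases eq_or_ne P ⊤ with hPtop | hPne
    · have hNB : ∀ k, (Nk k).toReal ≤ -B := by
        intro k
        refine le_trans (ENNReal.toReal_mono ENNReal.ofReal_ne_top (hNk_le k)) ?_
        rw [ENNReal.toReal_ofReal (by linarith)]
      have htop : (P : EReal) - (Nn : EReal) = ⊤ := by
        rw [hPtop, coe_ennreal_eq hNn_ne, EReal.coe_ennreal_top]
        exact EReal.top_sub_coe _
      rw [htop, EReal.tendsto_nhds_top_iff_real]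
      intro x
      set c : ℝ := max (x + (-B) + 1) 0 with hc
      have hxc : x + (-B) + 1 ≤ c := le_max_left _ _
      have hc0 : 0 ≤ c := le_max_right _ _
      have hPtend : Tendsto Pk atTop (𝓝 ⊤) := hPtop ▸ hPk_tend
      have hev : ∀ᶠ k in atTop, ENNReal.ofReal c < Pk k :=
        hPtend.eventually_const_lt ENNReal.ofReal_lt_top
      filter_upwards [hev] with k hk2
      rw [EReal.coe_lt_coe_iff]
      have h1 : c ≤ (Pk k).toReal := by
        have := ENNReal.toReal_mono (hPk_ne k) hk2.le
        rwa [ENNReal.toReal_ofReal hc0] at this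
      have h2 := hNB k
      rw [hIpk k]
      linarith
    · have h1 : Tendsto (fun k => (Pk k).toReal) atTop (𝓝 P.toReal) :=
        (ENNReal.tendsto_toReal hPne).comp hPk_tend
      have h2 : Tendsto (fun k => (Nk k).toReal) atTop (𝓝 Nn.toReal) :=
        (ENNReal.tendsto_toReal hNn_ne).comp hNtend
      have h3 : Tendsto Ip atTop (𝓝 (P.toReal - Nn.toReal)) :=
        (h1.sub h2).congr fun k => (hIpk k).symm
      have heq : (P : EReal) - (Nn : EReal) = ((P.toReal - Nn.toReal : ℝ) : EReal) := by
        rw [coe_ennreal_eq hPne, coe_ennreal_eq hNn_ne, ← EReal.coe_sub]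
      rw [heq]
      exact (continuous_coe_real_ereal.tendsto _).comp h3
  -- conclude
  have hCE : contEnergy W ρ = (((1 : ℝ) / 2 : ℝ) : EReal) * ((P : EReal) - (Nn : EReal)) := rfl
  have hmulTend : Tendsto (fun k => (((1 : ℝ) / 2 : ℝ) : EReal) * ((Ip k : ℝ) : EReal)) atTop
      (𝓝 (contEnergy W ρ)) := by
    rw [hCE]
    have hhalf : (((1 : ℝ) / 2 : ℝ) : EReal) ≠ 0 := by
      rw [ne_eq, EReal.coe_eq_zero]
      norm_num
    have hc : ContinuousAt (fun p : EReal × EReal => p.1 * p.2)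
        ((((1 : ℝ) / 2 : ℝ) : EReal), (P : EReal) - (Nn : EReal)) :=
      EReal.continuousAt_mul (Or.inl hhalf) (Or.inl hhalf)
        (Or.inl (EReal.coe_ne_bot _)) (Or.inl (EReal.coe_ne_top _))
    exact (hc.tendsto.comp (tendsto_const_nhds.prodMk_nhds hIpTend))
  refine le_of_tendsto hmulTend (Filter.Eventually.of_forall fun k => ?_)
  rw [← EReal.coe_mul]
  have : (1 : ℝ) / 2 * Ip k = 1 / 2 * ∫ x, Fb (φB k) ρ x ∂ρ := by rw [hFub k]
  rw [this]
  exact hk k
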